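/- Fix any τ ∈ (0,1). Then P( f(S_1,…,S_r,S_{n+1}) ∈ [ẹ_τ^M, ē_τ^M] ) ≥ 2τ·(n−r)/(n+1) − 1. (This is the two-sided coverage guarantee of Proposition 1: [ẹ_τ^M, ē_τ^M] is a level-(2τ(n−r)/(n+1)−1) forecast interval for the transfer error on the unseen domain n+1.) -/

import Mathlib

open MeasureTheory ProbabilityTheory
open Finset
open scoped ENNReal

/-- Tuples of `s` pairwise distinct indices from `Fin m`, i.e. injections `Fin s → Fin m`. -/
abbrev TransferUQ.Tup (s m : ℕ) := {g : Fin s → Fin m // Function.Injective g}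

open Classical in
/-- `F_M((-∞, b])`: the mass that the pooled empirical distribution of transfer errors
`F_M = ((n-r-1)!/n!) ∑_{(𝒯,d) ∈ 𝕋_{r+1,n}} δ_{e_{𝒯,d}}` assigns to `(-∞, b]`. -/
noncomputable def TransferUQ.FMIic (n r : ℕ) (E : TransferUQ.Tup (r+1) n → ℝ) (b : ℝ) : ℝ :=
  ((n - r - 1).factorial : ℝ) / (n.factorial : ℝ) *
    (Finset.univ.filter (fun g : TransferUQ.Tup (r+1) n => E g ≤ b)).card

open Classical in
/-- `F_M([b, ∞))`: the mass that the pooled empirical distribution of transfer errors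
assigns to `[b, ∞)`. -/
noncomputable def TransferUQ.FMIci (n r : ℕ) (E : TransferUQ.Tup (r+1) n → ℝ) (b : ℝ) : ℝ :=
  ((n - r - 1).factorial : ℝ) / (n.factorial : ℝ) *
    (Finset.univ.filter (fun g : TransferUQ.Tup (r+1) n => b ≤ E g)).card

/-- The upper `τ`-th quantile `ē_τ^M = inf {b : F_M((-∞,b]) ≥ τ}` of the pooled empirical
distribution of transfer errors. -/
noncomputable def TransferUQ.ebar (n r : ℕ) (E : TransferUQ.Tup (r+1) n → ℝ) (τ : ℝ) : ℝ :=
  sInf {b : ℝ | τ ≤ TransferUQ.FMIic n r E b}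

/-- The lower `(1-τ)`-th quantile `ẹ_τ^M = Q_{1-τ}(F_M) = sup {b : F_M([b,∞)) ≥ τ}` of the
pooled empirical distribution of transfer errors. -/
noncomputable def TransferUQ.elow (n r : ℕ) (E : TransferUQ.Tup (r+1) n → ℝ) (τ : ℝ) : ℝ :=
  sSup {b : ℝ | τ ≤ TransferUQ.FMIci n r E b}

section Aux


open TransferUQ in
lemma card_tup (s m : ℕ) : Fintype.card (Tup s m) = m.descFactorial s := by
  classical
  rw [Fintype.card_congr (Equiv.subtypeInjectiveEquivEmbedding (Fin s) (Fin m)),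
    Fintype.card_embedding_eq, Fintype.card_fin, Fintype.card_fin]

lemma exists_perm_comp {s m : ℕ} (a b : TransferUQ.Tup s m) :
    ∃ π : Equiv.Perm (Fin m), ∀ i, π (a.1 i) = b.1 i := by
  classical
  have hca : Fintype.card (Set.range a.1) = s := by
    rw [Set.card_range_of_injective a.2, Fintype.card_fin]
  have hcb : Fintype.card (Set.range b.1) = s := by
    rw [Set.card_range_of_injective b.2, Fintype.card_fin]
  have hcompl : Fintype.card ↥(Set.range a.1)ᶜ = Fintype.card ↥(Set.range b.1)ᶜ := by
    rw [Fintype.card_compl_set, Fintype.card_compl_set, hca, hcb]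
  let c : ↥(Set.range a.1)ᶜ ≃ ↥(Set.range b.1)ᶜ := Fintype.equivOfCardEq hcompl
  let ra : Fin s ≃ Set.range a.1 := Equiv.ofInjective a.1 a.2
  let rb : Fin s ≃ Set.range b.1 := Equiv.ofInjective b.1 b.2
  refine ⟨(Equiv.Set.sumCompl (Set.range a.1)).symm.trans
    ((Equiv.sumCongr (ra.symm.trans rb) c).trans (Equiv.Set.sumCompl (Set.range b.1))), fun i => ?_⟩
  have h1 : (Equiv.Set.sumCompl (Set.range a.1)).symm (a.1 i) = Sum.inl ⟨a.1 i, Set.mem_range_self i⟩ :=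
    Equiv.Set.sumCompl_symm_apply_of_mem (Set.mem_range_self i)
  have h2 : ra.symm ⟨a.1 i, Set.mem_range_self i⟩ = i := by
    apply ra.injective; simp [ra, Equiv.apply_ofInjective_symm]
  simp [h1, h2, rb]

open Classical in
lemma count_rank {T : Type*} [Fintype T] (v : T → ℝ) (k : ℕ) (hk : k ≤ Fintype.card T) :
    (univ.filter fun t => k ≤ (univ.filter fun g => v g < v t).card).card
      ≤ Fintype.card T - k := by
  classical
  set Sm := univ.filter fun t : T => (univ.filter fun g => v g < v t).card < k with hSm
  have hksm : k ≤ Sm.card := by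
    by_contra hc
    push_neg at hc
    have hne : (univ \ Sm).Nonempty := by
      rw [Finset.sdiff_nonempty]
      intro hsub
      have := Finset.card_le_card hsub
      simp only [Finset.card_univ] at this
      omega
    obtain ⟨t, ht, hmin⟩ := Finset.exists_min_image (univ \ Sm) v hne
    have hsub : (univ.filter fun g => v g < v t) ⊆ Sm := by
      intro g hg
      simp only [Finset.mem_filter, Finset.mem_univ, true_and] at hg
      by_contra hgs
      have : g ∈ univ \ Sm := by simp [hgs]
      exact absurd (hmin g this) (not_le.mpr hg)
    have : t ∈ Sm := by
      simp only [hSm, Finset.mem_filter, Finset.mem_univ, true_and]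
      calc (univ.filter fun g => v g < v t).card ≤ Sm.card := Finset.card_le_card hsub
        _ < k := by omega
    simp [Finset.mem_sdiff, this] at ht
  calc (univ.filter fun t => k ≤ (univ.filter fun g => v g < v t).card).card
      ≤ (univ \ Sm).card := by
        apply Finset.card_le_card
        intro t ht
        simp only [Finset.mem_filter, Finset.mem_univ, true_and] at ht
        simp only [Finset.mem_sdiff, Finset.mem_univ, true_and, hSm, Finset.mem_filter]
        omega
    _ = Fintype.card T - Sm.card := by
        rw [Finset.card_sdiff_of_subset (Finset.subset_univ _), Finset.card_univ]
    _ ≤ Fintype.card T - k := by omega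

lemma measurePreserving_comp_perm {𝒮 : Type*} [MeasurableSpace 𝒮] (μ : Measure 𝒮)
    [SigmaFinite μ] {m : ℕ} (π : Equiv.Perm (Fin m)) :
    MeasurePreserving (fun x : Fin m → 𝒮 => x ∘ π)
      (Measure.pi fun _ => μ) (Measure.pi fun _ => μ) := by
  have h := measurePreserving_piCongrLeft (fun _ : Fin m => μ) π.symm
  have he : ⇑(MeasurableEquiv.piCongrLeft (fun _ : Fin m => 𝒮) π.symm)
      = fun x : Fin m → 𝒮 => x ∘ π := by
    funext x b
    show (Equiv.piCongrLeft (fun _ : Fin m => 𝒮) π.symm) x b = x (π b)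
    conv_lhs => rw [show b = π.symm (π b) by simp]
    rw [Equiv.piCongrLeft_apply_apply]
  rwa [he] at h

open TransferUQ in
open Classical in
lemma FM_fact {n r : ℕ} (h : r + 1 ≤ n) :
    (Fintype.card (Tup (r+1) n) : ℝ) * ((n - r - 1).factorial : ℝ) = (n.factorial : ℝ) := by
  rw [card_tup]
  rw [show n - r - 1 = n - (r+1) by omega]
  rw [← Nat.cast_mul, mul_comm, Nat.factorial_mul_descFactorial h]

open TransferUQ in
open Classical in
lemma FM_count_Iic {n r : ℕ} (h : r + 1 ≤ n) {τ : ℝ} (E : Tup (r+1) n → ℝ) (b : ℝ)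
    (hτ : τ ≤ TransferUQ.FMIic n r E b) :
    τ * (Fintype.card (Tup (r+1) n) : ℝ)
      ≤ ((Finset.univ.filter fun g : Tup (r+1) n => E g ≤ b).card : ℝ) := by
  classical
  have hM : (0:ℝ) < (Fintype.card (Tup (r+1) n) : ℝ) := by
    have : 0 < Fintype.card (Tup (r+1) n) := by
      rw [card_tup]; exact Nat.pos_of_ne_zero (fun h0 => by rw [Nat.descFactorial_eq_zero_iff_lt] at h0; omega)
    exact_mod_cast this
  have hfac : (0:ℝ) < ((n - r - 1).factorial : ℝ) := by exact_mod_cast (n-r-1).factorial_pos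
  rw [TransferUQ.FMIic] at hτ
  have hkey : ((n - r - 1).factorial : ℝ) / (n.factorial : ℝ)
      = 1 / (Fintype.card (Tup (r+1) n) : ℝ) := by
    rw [div_eq_div_iff (by exact_mod_cast n.factorial_pos.ne') hM.ne', one_mul, mul_comm]
    exact FM_fact h
  rw [hkey] at hτ
  rw [div_mul_eq_mul_div, one_mul, le_div_iff₀ hM] at hτ
  exact hτ

open TransferUQ in
open Classical in
lemma FM_count_Ici {n r : ℕ} (h : r + 1 ≤ n) {τ : ℝ} (E : Tup (r+1) n → ℝ) (b : ℝ)
    (hτ : τ ≤ TransferUQ.FMIci n r E b) :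
    τ * (Fintype.card (Tup (r+1) n) : ℝ)
      ≤ ((Finset.univ.filter fun g : Tup (r+1) n => b ≤ E g).card : ℝ) := by
  classical
  have hM : (0:ℝ) < (Fintype.card (Tup (r+1) n) : ℝ) := by
    have : 0 < Fintype.card (Tup (r+1) n) := by
      rw [card_tup]; exact Nat.pos_of_ne_zero (fun h0 => by rw [Nat.descFactorial_eq_zero_iff_lt] at h0; omega)
    exact_mod_cast this
  rw [TransferUQ.FMIci] at hτ
  have hkey : ((n - r - 1).factorial : ℝ) / (n.factorial : ℝ)
      = 1 / (Fintype.card (Tup (r+1) n) : ℝ) := by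
    rw [div_eq_div_iff (by exact_mod_cast n.factorial_pos.ne') hM.ne', one_mul, mul_comm]
    exact FM_fact h
  rw [hkey] at hτ
  rw [div_mul_eq_mul_div, one_mul, le_div_iff₀ hM] at hτ
  exact hτ

open TransferUQ in
open Classical in
lemma FM_one {n r : ℕ} (h : r + 1 ≤ n) :
    ((n - r - 1).factorial : ℝ) / (n.factorial : ℝ) * (Fintype.card (Tup (r+1) n) : ℝ) = 1 := by
  rw [div_mul_eq_mul_div, mul_comm, FM_fact h]
  exact div_self (by exact_mod_cast n.factorial_pos.ne')

open TransferUQ in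
open Classical in
lemma FM_filter_pos {n r : ℕ} {τ : ℝ} (hτ0 : 0 < τ) {p : Tup (r+1) n → Prop}
    (h : τ ≤ ((n - r - 1).factorial : ℝ) / (n.factorial : ℝ) * ((univ.filter p).card : ℝ)) :
    (univ.filter p).Nonempty := by
  rw [Finset.nonempty_iff_ne_empty]
  intro h0
  rw [h0] at h
  simp at h
  linarith

open TransferUQ in
open Classical in
lemma ebar_lt_exists {n r : ℕ} (h : r + 1 ≤ n) {τ : ℝ} (hτ0 : 0 < τ) (hτ1 : τ ≤ 1)
    (E : Tup (r+1) n → ℝ) {e : ℝ} (hlt : TransferUQ.ebar n r E τ < e) :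
    ∃ b < e, τ ≤ TransferUQ.FMIic n r E b := by
  classical
  have hne : (univ : Finset (Tup (r+1) n)).Nonempty :=
    ⟨⟨Fin.castLE h, Fin.castLE_injective h⟩, mem_univ _⟩
  have hine : (univ.image E).Nonempty := hne.image E
  have hmax : τ ≤ TransferUQ.FMIic n r E ((univ.image E).max' hine) := by
    rw [TransferUQ.FMIic, Finset.filter_true_of_mem
      (fun g _ => Finset.le_max' _ _ (Finset.mem_image_of_mem E (mem_univ g))),
      Finset.card_univ, FM_one h]
    exact hτ1
  have hSne : {b : ℝ | τ ≤ TransferUQ.FMIic n r E b}.Nonempty := ⟨_, hmax⟩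
  have hbdd : BddBelow {b : ℝ | τ ≤ TransferUQ.FMIic n r E b} := by
    refine ⟨(univ.image E).min' hine, fun b hb => ?_⟩
    obtain ⟨g, hg⟩ := FM_filter_pos hτ0 hb
    rw [Finset.mem_filter] at hg
    exact le_trans (Finset.min'_le _ _ (Finset.mem_image_of_mem E (mem_univ g))) hg.2
  rw [TransferUQ.ebar] at hlt
  obtain ⟨b, hb1, hb2⟩ := (csInf_lt_iff hbdd hSne).mp hlt
  exact ⟨b, hb2, hb1⟩

open TransferUQ in
open Classical in
lemma elow_gt_exists {n r : ℕ} (h : r + 1 ≤ n) {τ : ℝ} (hτ0 : 0 < τ) (hτ1 : τ ≤ 1)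
    (E : Tup (r+1) n → ℝ) {e : ℝ} (hlt : e < TransferUQ.elow n r E τ) :
    ∃ b, e < b ∧ τ ≤ TransferUQ.FMIci n r E b := by
  classical
  have hne : (univ : Finset (Tup (r+1) n)).Nonempty :=
    ⟨⟨Fin.castLE h, Fin.castLE_injective h⟩, mem_univ _⟩
  have hine : (univ.image E).Nonempty := hne.image E
  have hmin : τ ≤ TransferUQ.FMIci n r E ((univ.image E).min' hine) := by
    rw [TransferUQ.FMIci, Finset.filter_true_of_mem
      (fun g _ => Finset.min'_le _ _ (Finset.mem_image_of_mem E (mem_univ g))),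
      Finset.card_univ, FM_one h]
    exact hτ1
  have hSne : {b : ℝ | τ ≤ TransferUQ.FMIci n r E b}.Nonempty := ⟨_, hmin⟩
  have hbdd : BddAbove {b : ℝ | τ ≤ TransferUQ.FMIci n r E b} := by
    refine ⟨(univ.image E).max' hine, fun b hb => ?_⟩
    obtain ⟨g, hg⟩ := FM_filter_pos hτ0 hb
    rw [Finset.mem_filter] at hg
    exact le_trans hg.2 (Finset.le_max' _ _ (Finset.mem_image_of_mem E (mem_univ g)))
  rw [TransferUQ.elow] at hlt
  obtain ⟨b, hb1, hb2⟩ := (lt_csSup_iff hbdd hSne).mp hlt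
  exact ⟨b, hb2, hb1⟩

open TransferUQ in
open Classical in
lemma core_bound {𝒮 : Type*} [MeasurableSpace 𝒮] (μ : Measure 𝒮) [IsProbabilityMeasure μ]
    {m s : ℕ} (F : (Fin m → 𝒮) → Tup s m → ℝ)
    (hFmeas : ∀ t, Measurable fun x => F x t)
    (hFeq : ∀ (π : Equiv.Perm (Fin m)) (x : Fin m → 𝒮) (g : Tup s m),
      F (x ∘ π) g = F x ⟨π ∘ g.1, π.injective.comp g.2⟩)
    (t₀ : Tup s m) (k : ℕ) (hk : k ≤ Fintype.card (Tup s m))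
    (hM : 0 < Fintype.card (Tup s m)) :
    (Measure.pi fun _ : Fin m => μ) {x | k ≤ (univ.filter fun g => F x g < F x t₀).card}
      ≤ ((Fintype.card (Tup s m) - k : ℕ) : ℝ≥0∞) / (Fintype.card (Tup s m) : ℝ≥0∞) := by
  classical
  set ν := Measure.pi fun _ : Fin m => μ with hν
  set A : Tup s m → Set (Fin m → 𝒮) :=
    fun t => {x | k ≤ (univ.filter fun g => F x g < F x t).card} with hA
  have hmeasA : ∀ t, MeasurableSet (A t) := by
    intro t
    have hcard : Measurable fun x => (univ.filter fun g => F x g < F x t).card := by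
      simp only [Finset.card_filter]
      exact Finset.measurable_sum _ (fun g _ => Measurable.ite
        (measurableSet_lt (hFmeas g) (hFmeas t)) measurable_const measurable_const)
    exact hcard measurableSet_Ici
  have hAeq : ∀ t, ν (A t) = ν (A t₀) := by
    intro t
    obtain ⟨π, hπ⟩ := exists_perm_comp t₀ t
    have ht : ∀ x : Fin m → 𝒮, F (x ∘ π) t₀ = F x t := by
      intro x
      rw [hFeq π x t₀]
      congr 1
      exact Subtype.ext (funext hπ)
    have hset : A t = (fun x => x ∘ π) ⁻¹' A t₀ := by
      ext x
      simp only [hA, Set.mem_setOf_eq, Set.mem_preimage]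
      have hcd : (univ.filter fun g => F (x ∘ π) g < F (x ∘ π) t₀).card
          = (univ.filter fun g => F x g < F x t).card := by
        refine Finset.card_bij' (fun g _ => ⟨π ∘ g.1, π.injective.comp g.2⟩)
          (fun g _ => ⟨π.symm ∘ g.1, π.symm.injective.comp g.2⟩) ?_ ?_ ?_ ?_
        · intro g hg
          simp only [Finset.mem_filter, Finset.mem_univ, true_and] at hg ⊢
          rw [← hFeq π x g, ← ht x]
          exact hg
        · intro g hg
          simp only [Finset.mem_filter, Finset.mem_univ, true_and] at hg ⊢
          rw [hFeq π x, ht x]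
          have hgg : (⟨⇑π ∘ (⇑π.symm ∘ g.1),
              π.injective.comp (π.symm.injective.comp g.2)⟩ : Tup s m) = g :=
            Subtype.ext (funext fun i => by simp)
          rw [hgg]
          exact hg
        · intro g hg
          apply Subtype.ext
          funext i
          simp
        · intro g hg
          apply Subtype.ext
          funext i
          simp
      rw [hcd]
    rw [hset, (measurePreserving_comp_perm μ π).measure_preimage
      (hmeasA t₀).nullMeasurableSet]
  have hsum_le : ∑ t : Tup s m, ν (A t)
      ≤ ((Fintype.card (Tup s m) - k : ℕ) : ℝ≥0∞) := by
    have h1 : ∀ x, ∑ t : Tup s m, (A t).indicator (fun _ => (1:ℝ≥0∞)) x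
        ≤ ((Fintype.card (Tup s m) - k : ℕ) : ℝ≥0∞) := by
      intro x
      have heq : ∑ t : Tup s m, (A t).indicator (fun _ => (1:ℝ≥0∞)) x
          = ((univ.filter fun t : Tup s m =>
              k ≤ (univ.filter fun g => F x g < F x t).card).card : ℝ≥0∞) := by
        rw [Finset.card_filter, Nat.cast_sum]
        refine Finset.sum_congr rfl fun t _ => ?_
        by_cases hx : x ∈ A t
        · have hx' : k ≤ (univ.filter fun g => F x g < F x t).card := hx
          rw [Set.indicator_of_mem hx, if_pos hx']; simp
        · have hx' : ¬ k ≤ (univ.filter fun g => F x g < F x t).card := hx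
          rw [Set.indicator_of_notMem hx, if_neg hx']; simp
      rw [heq]
      exact_mod_cast Nat.cast_le.mpr (count_rank (fun t => F x t) k hk)
    calc ∑ t : Tup s m, ν (A t)
        = ∑ t : Tup s m, ∫⁻ x, (A t).indicator (fun _ => 1) x ∂ν := by
          exact Finset.sum_congr rfl fun t _ => (lintegral_indicator_one (hmeasA t)).symm
      _ = ∫⁻ x, ∑ t : Tup s m, (A t).indicator (fun _ => 1) x ∂ν :=
          (lintegral_finset_sum _ fun t _ => measurable_one.indicator (hmeasA t)).symm
      _ ≤ ∫⁻ _, ((Fintype.card (Tup s m) - k : ℕ) : ℝ≥0∞) ∂ν := lintegral_mono h1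
      _ = _ := by rw [lintegral_const, measure_univ, mul_one]
  have hconst : (Fintype.card (Tup s m) : ℝ≥0∞) * ν (A t₀) = ∑ t : Tup s m, ν (A t) := by
    rw [Finset.sum_congr rfl fun t _ => hAeq t, Finset.sum_const, Finset.card_univ,
      nsmul_eq_mul]
  rw [ENNReal.le_div_iff_mul_le
    (Or.inl (by exact_mod_cast hM.ne')) (Or.inl (ENNReal.natCast_ne_top _))]
  rw [mul_comm]
  rw [hconst]
  exact hsum_le

lemma joint_law {Ω 𝒮 : Type*} [MeasurableSpace Ω] [MeasurableSpace 𝒮] (P : Measure Ω)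
    [IsProbabilityMeasure P] (μ : Measure 𝒮) [IsProbabilityMeasure μ] {m : ℕ}
    (S : Fin m → Ω → 𝒮) (hS : ∀ i, Measurable (S i))
    (hindep : iIndepFun S P) (hlaw : ∀ i, P.map (S i) = μ) :
    P.map (fun ω i => S i ω) = Measure.pi fun _ => μ := by
  refine (Measure.pi_eq fun s hs => ?_).symm
  rw [Measure.map_apply (measurable_pi_lambda _ hS) (MeasurableSet.univ_pi hs)]
  have hpre : (fun ω i => S i ω) ⁻¹' Set.pi Set.univ s = ⋂ i ∈ Finset.univ, S i ⁻¹' s i := by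
    ext ω
    simp [Set.mem_pi]
  rw [hpre, hindep.measure_inter_preimage_eq_mul Finset.univ (fun i _ => hs i)]
  refine Finset.prod_congr rfl fun i _ => ?_
  rw [← hlaw i, Measure.map_apply (hS i) (hs i)]

end Aux

open TransferUQ in
/-- **Proposition 1, two-sided guarantee.** If `S_1, …, S_{n+1}` are i.i.d. samples and
`e_{(d_1,…,d_r),d} = f(S_{d_1},…,S_{d_r},S_d)` is the transfer error from training samples
`d_1,…,d_r` to test sample `d`, then the transfer error onto the unseen domain `n+1` satisfies
`P(f(S_1,…,S_r,S_{n+1}) ∈ [ẹ_τ^M, ē_τ^M]) ≥ 2τ(n-r)/(n+1) - 1`. -/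
theorem transfer_error_two_sided_coverage
    {Ω : Type*} [MeasurableSpace Ω] (P : Measure Ω) [IsProbabilityMeasure P]
    {𝒮 : Type*} [MeasurableSpace 𝒮] (μ : Measure 𝒮) [IsProbabilityMeasure μ]
    (n r : ℕ) (hr : 1 ≤ r) (hrn : r < n)
    (S : Fin (n+1) → Ω → 𝒮) (hSmeas : ∀ i, Measurable (S i))
    (hindep : iIndepFun S P)
    (hlaw : ∀ i, P.map (S i) = μ)
    (f : (Fin (r+1) → 𝒮) → ℝ) (hf : Measurable f)
    (τ : ℝ) (hτ : τ ∈ Set.Ioo (0:ℝ) 1) :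
    ENNReal.ofReal (2 * τ * ((n : ℝ) - r) / (n + 1) - 1) ≤
      P {ω |
        f (Fin.snoc (fun i : Fin r => S (Fin.castLE (by omega) i) ω) (S (Fin.last n) ω)) ∈
          Set.Icc
            (TransferUQ.elow n r (fun g => f (fun i => S (Fin.castSucc (g.val i)) ω)) τ)
            (TransferUQ.ebar n r (fun g => f (fun i => S (Fin.castSucc (g.val i)) ω)) τ)} := by
  classical
  obtain ⟨hτ0, hτ1⟩ := hτ
  have hr1n : r + 1 ≤ n := hrn
  set X : Ω → Fin (n+1) → 𝒮 := fun ω i => S i ω with hX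
  have hXmeas : Measurable X := measurable_pi_lambda _ hSmeas
  have hmap : P.map X = Measure.pi fun _ : Fin (n+1) => μ := joint_law P μ S hSmeas hindep hlaw
  set Et : (Fin (n+1) → 𝒮) → Tup (r+1) (n+1) → ℝ :=
    fun x t => f (fun i => x (t.1 i)) with hEt
  have hEtmeas : ∀ t, Measurable fun x => Et x t :=
    fun t => hf.comp (measurable_pi_lambda _ fun i => measurable_pi_apply _)
  set En : (Fin (n+1) → 𝒮) → Tup (r+1) n → ℝ :=
    fun x g => f (fun i => x (Fin.castSucc (g.1 i))) with hEn
  -- the test tuple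
  have ht0inj : Function.Injective
      (Fin.snoc (fun i : Fin r => Fin.castLE (show r ≤ n+1 by omega) i) (Fin.last n) :
        Fin (r+1) → Fin (n+1)) := by
    have hval : ∀ i : Fin (r+1),
        ((Fin.snoc (fun i : Fin r => Fin.castLE (show r ≤ n+1 by omega) i) (Fin.last n) :
          Fin (r+1) → Fin (n+1)) i : ℕ) = if (i : ℕ) < r then (i : ℕ) else n := by
      intro i
      induction i using Fin.lastCases with
      | last => simp
      | cast j => simp [Fin.snoc_castSucc, j.isLt]
    intro i j hij
    have h1 := hval i
    have h2 := hval j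
    rw [hij, h2] at h1
    have hi := i.isLt
    have hj := j.isLt
    apply Fin.ext
    split_ifs at h1 <;> omega
  set t₀ : Tup (r+1) (n+1) :=
    ⟨Fin.snoc (fun i : Fin r => Fin.castLE (show r ≤ n+1 by omega) i) (Fin.last n), ht0inj⟩
    with ht₀
  have htest : ∀ x : Fin (n+1) → 𝒮,
      f (Fin.snoc (fun i : Fin r => x (Fin.castLE (show r ≤ n+1 by omega) i)) (x (Fin.last n)))
        = Et x t₀ := by
    intro x
    show _ = f (fun i => x (t₀.1 i))
    congr 1
    funext i
    induction i using Fin.lastCases with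
    | last => simp [ht₀]
    | cast j => simp [ht₀, Fin.snoc_castSucc]
  -- cardinalities
  set M := Fintype.card (Tup (r+1) n) with hM
  set M' := Fintype.card (Tup (r+1) (n+1)) with hM'
  set k := ⌈τ * (M : ℝ)⌉₊ with hk
  have hMd : M = (n - r) * n.descFactorial r := by
    rw [hM, card_tup, Nat.descFactorial_succ]
  have hM'd : M' = (n + 1) * n.descFactorial r := by
    rw [hM', card_tup, Nat.succ_descFactorial_succ]
  have hdpos : 0 < n.descFactorial r :=
    Nat.pos_of_ne_zero (fun h0 => by rw [Nat.descFactorial_eq_zero_iff_lt] at h0; omega)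
  have hMpos : 0 < M := by rw [hMd]; exact Nat.mul_pos (by omega) hdpos
  have hM'pos : 0 < M' := by rw [hM'd]; exact Nat.mul_pos (by omega) hdpos
  have hkM : k ≤ M := by
    rw [hk]
    refine Nat.ceil_le.mpr ?_
    calc τ * (M : ℝ) ≤ 1 * (M : ℝ) := by
          apply mul_le_mul_of_nonneg_right hτ1.le (by positivity)
      _ = (M : ℝ) := one_mul _
  have hkM' : k ≤ M' := hkM.trans (by rw [hMd, hM'd]; exact Nat.mul_le_mul_right _ (by omega))
  -- embed small tuples into big ones
  have hι : ∀ (x : Fin (n+1) → 𝒮) (p : ℝ → Prop),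
      (univ.filter fun g : Tup (r+1) n => p (En x g)).card
        ≤ (univ.filter fun t : Tup (r+1) (n+1) => p (Et x t)).card := by
    intro x p
    refine Finset.card_le_card_of_injOn
      (fun g => ⟨Fin.castSucc ∘ g.1, (Fin.castSucc_injective n).comp g.2⟩) ?_ ?_
    · intro g hg
      simp only [Finset.mem_coe, Finset.mem_filter, Finset.mem_univ, true_and] at hg ⊢
      exact hg
    · intro a _ b _ hab
      apply Subtype.ext
      have hv := congrArg Subtype.val hab
      funext i
      exact Fin.castSucc_injective n (congrFun hv i)
  -- the two bad events
  set AU : Set (Fin (n+1) → 𝒮) :=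
    {x | k ≤ (univ.filter fun g : Tup (r+1) (n+1) => Et x g < Et x t₀).card} with hAU
  set AL : Set (Fin (n+1) → 𝒮) :=
    {x | k ≤ (univ.filter fun g : Tup (r+1) (n+1) => Et x t₀ < Et x g).card} with hAL
  have hupx : ∀ x : Fin (n+1) → 𝒮,
      TransferUQ.ebar n r (En x) τ < Et x t₀ → x ∈ AU := by
    intro x hlt
    obtain ⟨b, hbe, hbτ⟩ := ebar_lt_exists hr1n hτ0 hτ1.le (En x) hlt
    have h1 := FM_count_Iic hr1n (En x) b hbτ
    have h2 : (univ.filter fun g : Tup (r+1) n => En x g ≤ b).card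
        ≤ (univ.filter fun g : Tup (r+1) n => En x g < Et x t₀).card := by
      refine Finset.card_le_card fun g hg => ?_
      simp only [Finset.mem_filter, Finset.mem_univ, true_and] at hg ⊢
      exact lt_of_le_of_lt hg hbe
    have h3 := hι x (fun u => u < Et x t₀)
    show k ≤ _
    refine Nat.ceil_le.mpr ?_
    calc τ * (M : ℝ) ≤ _ := h1
      _ ≤ _ := by exact_mod_cast Nat.cast_le.mpr (h2.trans h3)
  have hlowx : ∀ x : Fin (n+1) → 𝒮,
      Et x t₀ < TransferUQ.elow n r (En x) τ → x ∈ AL := by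
    intro x hlt
    obtain ⟨b, hbe, hbτ⟩ := elow_gt_exists hr1n hτ0 hτ1.le (En x) hlt
    have h1 := FM_count_Ici hr1n (En x) b hbτ
    have h2 : (univ.filter fun g : Tup (r+1) n => b ≤ En x g).card
        ≤ (univ.filter fun g : Tup (r+1) n => Et x t₀ < En x g).card := by
      refine Finset.card_le_card fun g hg => ?_
      simp only [Finset.mem_filter, Finset.mem_univ, true_and] at hg ⊢
      exact lt_of_lt_of_le hbe hg
    have h3 := hι x (fun u => Et x t₀ < u)
    show k ≤ _
    refine Nat.ceil_le.mpr ?_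
    calc τ * (M : ℝ) ≤ _ := h1
      _ ≤ _ := by exact_mod_cast Nat.cast_le.mpr (h2.trans h3)
  -- measurability of the bad events
  have hcardmeas : ∀ (v : (Fin (n+1) → 𝒮) → Tup (r+1) (n+1) → ℝ),
      (∀ t, Measurable fun x => v x t) →
      ∀ (w : (Fin (n+1) → 𝒮) → Tup (r+1) (n+1) → ℝ), (∀ t, Measurable fun x => w x t) →
      MeasurableSet {x | k ≤ (univ.filter fun g : Tup (r+1) (n+1) => v x g < w x g).card} := by
    intro v hv w hw
    have hcard : Measurable fun x => (univ.filter fun g : Tup (r+1) (n+1) => v x g < w x g).card := by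
      simp only [Finset.card_filter]
      exact Finset.measurable_sum _ (fun g _ => Measurable.ite
        (measurableSet_lt (hv g) (hw g)) measurable_const measurable_const)
    exact hcard measurableSet_Ici
  have hAUmeas : MeasurableSet AU :=
    hcardmeas (fun x g => Et x g) hEtmeas (fun x _ => Et x t₀) (fun _ => hEtmeas t₀)
  have hALmeas : MeasurableSet AL :=
    hcardmeas (fun x _ => Et x t₀) (fun _ => hEtmeas t₀) (fun x g => Et x g) hEtmeas
  -- probability bounds on the bad events
  set q : ℝ≥0∞ := ((M' - k : ℕ) : ℝ≥0∞) / (M' : ℝ≥0∞) with hq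
  have hFeq : ∀ (π : Equiv.Perm (Fin (n+1))) (x : Fin (n+1) → 𝒮) (g : Tup (r+1) (n+1)),
      Et (x ∘ π) g = Et x ⟨π ∘ g.1, π.injective.comp g.2⟩ := fun π x g => rfl
  have hqU : (Measure.pi fun _ : Fin (n+1) => μ) AU ≤ q :=
    core_bound μ Et hEtmeas hFeq t₀ k hkM' hM'pos
  have hqL : (Measure.pi fun _ : Fin (n+1) => μ) AL ≤ q := by
    have h := core_bound μ (fun x t => -Et x t) (fun t => (hEtmeas t).neg)
      (fun π x g => by simp only [hFeq]) t₀ k hkM' hM'pos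
    have hsets : {x | k ≤ (univ.filter fun g : Tup (r+1) (n+1) =>
        (fun x t => -Et x t) x g < (fun x t => -Et x t) x t₀).card} = AL := by
      ext x
      simp only [hAL, Set.mem_setOf_eq, neg_lt_neg_iff]
    rwa [hsets] at h
  have hPU : P (X ⁻¹' AU) ≤ q := by
    rw [← Measure.map_apply hXmeas hAUmeas, hmap]
    exact hqU
  have hPL : P (X ⁻¹' AL) ≤ q := by
    rw [← Measure.map_apply hXmeas hALmeas, hmap]
    exact hqL
  -- main abstract step
  have main : ∀ Ev : Set Ω, Evᶜ ⊆ X ⁻¹' AU ∪ X ⁻¹' AL →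
      ENNReal.ofReal (2 * τ * ((n : ℝ) - r) / (n + 1) - 1) ≤ P Ev := by
    intro Ev hsub
    by_cases hc : 2 * τ * ((n : ℝ) - r) / (n + 1) - 1 ≤ 0
    · rw [ENNReal.ofReal_eq_zero.mpr hc]
      exact zero_le
    push_neg at hc
    set c : ℝ := τ * ((n : ℝ) - r) / (n + 1) with hcdef
    have hnr : (0:ℝ) ≤ (n : ℝ) - r := by
      have : (r : ℝ) ≤ (n : ℝ) := by exact_mod_cast hrn.le
      linarith
    have hc0 : 0 ≤ c := by positivity
    have hc1 : c ≤ 1 := by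
      rw [hcdef, div_le_one (by positivity)]
      calc τ * ((n : ℝ) - r) ≤ 1 * ((n : ℝ) - r) :=
            mul_le_mul_of_nonneg_right hτ1.le hnr
        _ = (n : ℝ) - r := one_mul _
        _ ≤ (n : ℝ) + 1 := by linarith [Nat.cast_nonneg (α := ℝ) r]
    have h2c : 2 * τ * ((n : ℝ) - r) / (n + 1) = 2 * c := by
      rw [hcdef]; ring
    -- bound q by a real quantity
    have hq_le : q ≤ ENNReal.ofReal (1 - c) := by
      rw [hq, ENNReal.div_le_iff_le_mul (Or.inl (by exact_mod_cast hM'pos.ne'))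
        (Or.inl (ENNReal.natCast_ne_top _))]
      rw [← ENNReal.ofReal_natCast (M' - k), ← ENNReal.ofReal_natCast M',
        ← ENNReal.ofReal_mul (by linarith)]
      refine ENNReal.ofReal_le_ofReal ?_
      rw [Nat.cast_sub hkM']
      have hck : c * (M' : ℝ) ≤ (k : ℝ) := by
        have hdM : c * (M' : ℝ) = τ * (M : ℝ) := by
          have h1 : (M' : ℝ) = ((n : ℝ) + 1) * (n.descFactorial r : ℝ) := by
            rw [hM'd]; push_cast; ring
          have h2 : (M : ℝ) = ((n : ℝ) - (r : ℝ)) * (n.descFactorial r : ℝ) := by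
            rw [hMd]
            push_cast [Nat.cast_sub hrn.le]
            ring
          rw [hcdef, h1, h2]
          field_simp
        rw [hdM]
        exact Nat.le_ceil _
      nlinarith [Nat.cast_nonneg (α := ℝ) M']
    -- 1 ≤ P Ev + (q + q)
    have hone : (1 : ℝ≥0∞) ≤ P Ev + (q + q) := by
      have hu : (1 : ℝ≥0∞) = P (Ev ∪ Evᶜ) := by rw [Set.union_compl_self, measure_univ]
      calc (1 : ℝ≥0∞) = P (Ev ∪ Evᶜ) := hu
        _ ≤ P Ev + P Evᶜ := measure_union_le _ _
        _ ≤ P Ev + (q + q) := by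
            refine add_le_add le_rfl ?_
            calc P Evᶜ ≤ P (X ⁻¹' AU ∪ X ⁻¹' AL) := measure_mono hsub
              _ ≤ P (X ⁻¹' AU) + P (X ⁻¹' AL) := measure_union_le _ _
              _ ≤ q + q := add_le_add hPU hPL
    have hqtop : q + q ≠ ⊤ := by
      rw [hq]
      refine ENNReal.add_ne_top.mpr ⟨?_, ?_⟩ <;>
        exact (ENNReal.div_lt_top (ENNReal.natCast_ne_top _)
          (by exact_mod_cast hM'pos.ne')).ne
    rw [← ENNReal.add_le_add_iff_right hqtop]
    refine le_trans ?_ hone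
    calc ENNReal.ofReal (2 * τ * ((n : ℝ) - r) / (n + 1) - 1) + (q + q)
        ≤ ENNReal.ofReal (2 * c - 1) + (ENNReal.ofReal (1 - c) + ENNReal.ofReal (1 - c)) := by
          rw [h2c]
          exact add_le_add le_rfl (add_le_add hq_le hq_le)
      _ = ENNReal.ofReal ((2 * c - 1) + ((1 - c) + (1 - c))) := by
          rw [ENNReal.ofReal_add (by rw [h2c] at hc; linarith) (by linarith),
            ENNReal.ofReal_add (by linarith) (by linarith)]
      _ = 1 := by
          rw [show (2 * c - 1) + ((1 - c) + (1 - c)) = 1 by ring, ENNReal.ofReal_one]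
  refine main _ ?_
  intro ω hω
  simp only [Set.mem_compl_iff, Set.mem_setOf_eq, Set.mem_Icc, not_and_or, not_le] at hω
  cases hω with
  | inl h =>
    right
    show X ω ∈ AL
    refine hlowx (X ω) ?_
    have h' : f (Fin.snoc (fun i : Fin r => X ω (Fin.castLE (show r ≤ n+1 by omega) i))
        (X ω (Fin.last n))) < TransferUQ.elow n r (En (X ω)) τ := h
    rwa [htest (X ω)] at h'
  | inr h =>
    left
    show X ω ∈ AU
    refine hupx (X ω) ?_
    have h' : TransferUQ.ebar n r (En (X ω)) τ
        < f (Fin.snoc (fun i : Fin r => X ω (Fin.castLE (show r ≤ n+1 by omega) i))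
          (X ω (Fin.last n))) := h
    rwa [htest (X ω)] at h'
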